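/- Let L ⊂ ℝ be a Galois quартic extension of ℚ with Galois group ≅ ℤ/2 × ℤ/2, let u₁, u₂, u₃ be fundamental units of the three quadratic subfields, and let E be the subgroup of units generated by u₁, u₂, u₃. Then for every unit u of the ring of integers of L, u² ∈ ±E, i.e. u² = ± u₁^{m₁} u₂^{m₂} u₃^{m₃} for some integers m₁, m₂, m₃. -/

import Mathlib

set_option maxHeartbeats 1000000
set_option synthInstance.maxHeartbeats 400000

open NumberField

section Helpers

open IntermediateField Module

private lemma unique_ne_one {G : Type*} [Group G] (H : Subgroup G)
    (h : Nat.card H = 2) :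
    ∃ τ : G, τ ∈ H ∧ τ ≠ 1 ∧ ∀ g ∈ H, g = 1 ∨ g = τ := by
  obtain ⟨y, hy, hyu⟩ := (Nat.card_eq_two_iff' (1 : H)).mp h
  refine ⟨y.1, y.2, fun hc => hy (Subtype.ext hc), fun g hg => ?_⟩
  by_cases hg1 : g = 1
  · exact Or.inl hg1
  · right
    have := hyu ⟨g, hg⟩ (fun hc => hg1 (by simpa [Subtype.ext_iff] using hc))
    exact congrArg Subtype.val this

private lemma quad_step {L : IntermediateField ℚ ℝ} [FiniteDimensional ℚ L] [IsGalois ℚ L]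
    {K : IntermediateField ℚ ℝ} {F : IntermediateField ℚ L} (hF : lift F = K)
    {τ : L ≃ₐ[ℚ] L} (hτ2 : τ * τ = 1)
    (hH : ∀ g ∈ F.fixingSubgroup, g = 1 ∨ g = τ)
    (v : (𝓞 K)ˣ)
    (hfund : ∀ w : (𝓞 K)ˣ, ∃ k : ℤ, w = v ^ k ∨ w = -v ^ k)
    (u : (𝓞 L)ˣ) :
    ∃ k : ℤ,
      ((((u : 𝓞 L) : L) : ℝ) * ((τ ((u : 𝓞 L) : L) : L) : ℝ) = (((v : 𝓞 K) : K) : ℝ) ^ k) ∨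
      ((((u : 𝓞 L) : L) : ℝ) * ((τ ((u : 𝓞 L) : L) : L) : ℝ) = -(((v : 𝓞 K) : K) : ℝ) ^ k) := by
  classical
  set z : L := ((u : 𝓞 L) : L) with hz
  set z' : L := (((u⁻¹ : (𝓞 L)ˣ) : 𝓞 L) : L) with hz'
  have hzz' : z * z' = 1 := by
    have h1 : ((u : 𝓞 L) * ((u⁻¹ : (𝓞 L)ˣ) : 𝓞 L)) = 1 := by
      rw [← Units.val_mul]; simp
    calc z * z' = algebraMap (𝓞 L) L ((u : 𝓞 L) * ((u⁻¹ : (𝓞 L)ˣ) : 𝓞 L)) := by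
          rw [map_mul]
      _ = 1 := by rw [h1, map_one]
  have hττ : ∀ w : L, τ (τ w) = w := by
    intro w
    have := congrArg (fun s : L ≃ₐ[ℚ] L => s w) hτ2
    simpa using this
  -- the product z * τ z lies in F
  have hmem : ∀ w w' : L, w * w' = 1 → w * τ w ∈ F := by
    intro w w' hww'
    have h1 : w * τ w ∈ MulAction.fixedPoints F.fixingSubgroup L := by
      rw [MulAction.mem_fixedPoints]
      intro g
      rcases hH g.1 g.2 with hg | hg
      · have : ((g : L ≃ₐ[ℚ] L)) • (w * τ w) = w * τ w := by
          rw [hg]; rw [AlgEquiv.smul_def]; simp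
        exact this
      · have : ((g : L ≃ₐ[ℚ] L)) • (w * τ w) = w * τ w := by
          rw [hg, AlgEquiv.smul_def, map_mul, hττ w]
          ring
        exact this
    have h2 : w * τ w ∈ fixedField F.fixingSubgroup := h1
    rwa [IsGalois.fixedField_fixingSubgroup] at h2
  have hmemF : z * τ z ∈ F := hmem z z' hzz'
  have hτzz' : τ z * τ z' = 1 := by rw [← map_mul, hzz', map_one]
  have hmemF' : z' * τ z' ∈ F := hmem z' z (by rw [mul_comm]; exact hzz')
  -- real values
  set y : ℝ := ((z : ℝ)) * ((τ z : L) : ℝ) with hy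
  set y' : ℝ := ((z' : ℝ)) * ((τ z' : L) : ℝ) with hy'
  have hcoe_mul : ∀ a b : L, ((a * b : L) : ℝ) = (a : ℝ) * (b : ℝ) := fun a b => rfl
  have hyK : y ∈ K := by
    have h1 : ((z * τ z : L) : ℝ) ∈ lift F := (mem_lift (z * τ z)).mpr hmemF
    rw [hF] at h1
    rwa [hcoe_mul] at h1
  have hy'K : y' ∈ K := by
    have h1 : ((z' * τ z' : L) : ℝ) ∈ lift F := (mem_lift (z' * τ z')).mpr hmemF'
    rw [hF] at h1
    rwa [hcoe_mul] at h1
  -- integrality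
  have hint : ∀ w : 𝓞 L, ∀ σ : L ≃ₐ[ℚ] L, IsIntegral ℤ ((σ ((w : L)) : L) : ℝ) := by
    intro w σ
    have h0 : IsIntegral ℤ ((w : L)) := RingOfIntegers.isIntegral_coe w
    exact h0.map ((algebraMap L ℝ).comp (σ : L →+* L)).toIntAlgHom
  have hint' : ∀ w : 𝓞 L, IsIntegral ℤ (((w : L)) : ℝ) := by
    intro w
    have h0 : IsIntegral ℤ ((w : L)) := RingOfIntegers.isIntegral_coe w
    exact h0.map (algebraMap L ℝ).toIntAlgHom
  have hy_int : IsIntegral ℤ y := (hint' (u : 𝓞 L)).mul (hint (u : 𝓞 L) τ)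
  have hy'_int : IsIntegral ℤ y' := (hint' ((u⁻¹ : (𝓞 L)ˣ) : 𝓞 L)).mul
    (hint ((u⁻¹ : (𝓞 L)ˣ) : 𝓞 L) τ)
  have hKinj : Function.Injective (algebraMap K ℝ) := (algebraMap K ℝ).injective
  have ha : IsIntegral ℤ ((⟨y, hyK⟩ : K)) := by
    refine (isIntegral_algHom_iff ((algebraMap K ℝ).toIntAlgHom) hKinj).mp ?_
    exact hy_int
  have hb : IsIntegral ℤ ((⟨y', hy'K⟩ : K)) := by
    refine (isIntegral_algHom_iff ((algebraMap K ℝ).toIntAlgHom) hKinj).mp ?_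
    exact hy'_int
  set A : 𝓞 K := ⟨⟨y, hyK⟩, ha⟩ with hA
  set B : 𝓞 K := ⟨⟨y', hy'K⟩, hb⟩ with hB
  have hyy' : y * y' = 1 := by
    have e1 : (z : ℝ) * (z' : ℝ) = 1 := by
      have := congrArg (fun t : L => (t : ℝ)) hzz'
      simpa using this
    have e2 : ((τ z : L) : ℝ) * ((τ z' : L) : ℝ) = 1 := by
      have := congrArg (fun t : L => (t : ℝ)) hτzz'
      simpa using this
    calc y * y' = ((z : ℝ) * (z' : ℝ)) * (((τ z : L) : ℝ) * ((τ z' : L) : ℝ)) := by ring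
      _ = 1 := by rw [e1, e2, one_mul]
  have hAB : A * B = 1 := by
    apply RingOfIntegers.ext
    apply Subtype.ext
    show y * y' = 1
    exact hyy'
  set w : (𝓞 K)ˣ := ⟨A, B, hAB, by rw [mul_comm]; exact hAB⟩ with hw
  set f : 𝓞 K →+* ℝ := (algebraMap K ℝ).comp (algebraMap (𝓞 K) K) with hf
  set r : ℝ := (((v : 𝓞 K) : K) : ℝ) with hr
  have hfw : f (w : 𝓞 K) = y := rfl
  have hpow : ∀ m : ℤ, f ((v ^ m : (𝓞 K)ˣ) : 𝓞 K) = r ^ m := by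
    intro m
    have h1 : f ((v ^ m : (𝓞 K)ˣ) : 𝓞 K) = ((Units.map (f : 𝓞 K →* ℝ) (v ^ m) : ℝˣ) : ℝ) := rfl
    rw [h1, map_zpow, Units.val_zpow_eq_zpow_val]
    rfl
  obtain ⟨k, hk | hk⟩ := hfund w
  · refine ⟨k, Or.inl ?_⟩
    have h2 := congrArg (fun t : (𝓞 K)ˣ => f (t : 𝓞 K)) hk
    rw [hpow k] at h2
    rw [hfw] at h2
    exact h2
  · refine ⟨k, Or.inr ?_⟩
    have h2 := congrArg (fun t : (𝓞 K)ˣ => f (t : 𝓞 K)) hk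
    rw [Units.val_neg, map_neg, hpow k] at h2
    rw [hfw] at h2
    exact h2

private lemma norm_pm_one {L : IntermediateField ℚ ℝ} [FiniteDimensional ℚ L] [IsGalois ℚ L]
    (u : (𝓞 L)ˣ) :
    (∏ g : L ≃ₐ[ℚ] L, ((g ((u : 𝓞 L) : L) : L) : ℝ)) = 1 ∨
      (∏ g : L ≃ₐ[ℚ] L, ((g ((u : 𝓞 L) : L) : L) : ℝ)) = -1 := by
  classical
  set z : L := ((u : 𝓞 L) : L) with hz
  set z' : L := (((u⁻¹ : (𝓞 L)ˣ) : 𝓞 L) : L) with hz'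
  have hzz' : z * z' = 1 := by
    have h1 : ((u : 𝓞 L) * ((u⁻¹ : (𝓞 L)ˣ) : 𝓞 L)) = 1 := by
      rw [← Units.val_mul]; simp
    calc z * z' = algebraMap (𝓞 L) L ((u : 𝓞 L) * ((u⁻¹ : (𝓞 L)ˣ) : 𝓞 L)) := by
          rw [map_mul]
      _ = 1 := by rw [h1, map_one]
  set n : L := ∏ g : L ≃ₐ[ℚ] L, g z with hn
  set n' : L := ∏ g : L ≃ₐ[ℚ] L, g z' with hn'
  have hbotmem : ∀ t : L, (∀ σ : L ≃ₐ[ℚ] L, σ t = t) → t ∈ (⊥ : IntermediateField ℚ L) := by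
    intro t ht
    have h1 : t ∈ IntermediateField.fixedField (⊤ : Subgroup (L ≃ₐ[ℚ] L)) := fun g => ht g.1
    rwa [← IntermediateField.fixingSubgroup_bot (F := ℚ) (E := L),
      IsGalois.fixedField_fixingSubgroup] at h1
  have hinv : ∀ (t : L) (σ : L ≃ₐ[ℚ] L), σ (∏ g : L ≃ₐ[ℚ] L, g t) = ∏ g : L ≃ₐ[ℚ] L, g t := by
    intro t σ
    rw [map_prod]
    exact Fintype.prod_equiv (Equiv.mulLeft σ) (fun g => σ (g t)) (fun g => g t) (fun g => rfl)
  obtain ⟨q, hq⟩ := IntermediateField.mem_bot.mp (hbotmem n (hinv z))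
  obtain ⟨q', hq'⟩ := IntermediateField.mem_bot.mp (hbotmem n' (hinv z'))
  have hnn' : n * n' = 1 := by
    rw [hn, hn', ← Finset.prod_mul_distrib]
    have : ∀ g : L ≃ₐ[ℚ] L, g z * g z' = 1 := by
      intro g; rw [← map_mul, hzz', map_one]
    simp [this]
  have hqq' : q * q' = 1 := by
    have : algebraMap ℚ L (q * q') = algebraMap ℚ L 1 := by
      rw [map_mul, hq, hq', hnn', map_one]
    exact (algebraMap ℚ L).injective this
  -- q is an algebraic integer
  have hint : ∀ (w : 𝓞 L) (σ : L ≃ₐ[ℚ] L), IsIntegral ℤ (σ ((w : L))) := by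
    intro w σ
    exact (RingOfIntegers.isIntegral_coe w).map (σ : L →+* L).toIntAlgHom
  have hn_int : IsIntegral ℤ n := by
    have : n ∈ integralClosure ℤ L := by
      rw [hn]
      exact Subalgebra.prod_mem _ (fun g _ => hint u g)
    exact this
  have hn'_int : IsIntegral ℤ n' := by
    have : n' ∈ integralClosure ℤ L := by
      rw [hn']
      exact Subalgebra.prod_mem _ (fun g _ => hint (u⁻¹ : (𝓞 L)ˣ) g)
    exact this
  have hq_int : IsIntegral ℤ q := by
    refine (isIntegral_algHom_iff ((algebraMap ℚ L).toIntAlgHom)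
      (algebraMap ℚ L).injective).mp ?_
    show IsIntegral ℤ (algebraMap ℚ L q)
    rw [hq]; exact hn_int
  have hq'_int : IsIntegral ℤ q' := by
    refine (isIntegral_algHom_iff ((algebraMap ℚ L).toIntAlgHom)
      (algebraMap ℚ L).injective).mp ?_
    show IsIntegral ℤ (algebraMap ℚ L q')
    rw [hq']; exact hn'_int
  obtain ⟨a, haq⟩ := IsIntegrallyClosed.isIntegral_iff.mp hq_int
  obtain ⟨b, hbq⟩ := IsIntegrallyClosed.isIntegral_iff.mp hq'_int
  have hab : a * b = 1 := by
    have : ((a * b : ℤ) : ℚ) = ((1 : ℤ) : ℚ) := by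
      push_cast
      rw [show ((a : ℚ)) = q from haq, show ((b : ℚ)) = q' from hbq, hqq']
    exact_mod_cast this
  have ha1 : a = 1 ∨ a = -1 := Int.isUnit_iff.mp (IsUnit.of_mul_eq_one b hab)
  -- the real product equals the image of q
  have hreal : (∏ g : L ≃ₐ[ℚ] L, ((g z : L) : ℝ)) = ((q : ℚ) : ℝ) := by
    have h1 : ((n : L) : ℝ) = ∏ g : L ≃ₐ[ℚ] L, ((g z : L) : ℝ) := by
      rw [hn]
      exact map_prod (algebraMap L ℝ) (fun g : L ≃ₐ[ℚ] L => g z) Finset.univ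
    have h2 : ((n : L) : ℝ) = ((q : ℚ) : ℝ) := by
      rw [← hq]
      exact (IsScalarTower.algebraMap_apply ℚ L ℝ q).symm
    rw [← h1, h2]
  rcases ha1 with h | h
  · left
    rw [hreal, ← haq, h]; norm_num
  · right
    rw [hreal, ← haq, h]; norm_num

end Helpers

theorem unit_sq_mem_E
    (L : IntermediateField ℚ ℝ) (hdeg : Module.finrank ℚ L = 4) [IsGalois ℚ L]
    (hklein : Nonempty ((L ≃ₐ[ℚ] L) ≃* Multiplicative (ZMod 2 × ZMod 2)))
    (d₁ d₂ d₃ : ℤ) (hd₁ : Squarefree d₁) (hd₂ : Squarefree d₂) (hd₃ : Squarefree d₃)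
    (K₁ K₂ K₃ : IntermediateField ℚ ℝ)
    (hK₁ : K₁ = IntermediateField.adjoin ℚ {Real.sqrt d₁})
    (hK₂ : K₂ = IntermediateField.adjoin ℚ {Real.sqrt d₂})
    (hK₃ : K₃ = IntermediateField.adjoin ℚ {Real.sqrt d₃})
    (hK₁L : K₁ ≤ L) (hK₂L : K₂ ≤ L) (hK₃L : K₃ ≤ L)
    (h12 : K₁ ≠ K₂) (h13 : K₁ ≠ K₃) (h23 : K₂ ≠ K₃)
    (hq₁ : Module.finrank ℚ K₁ = 2) (hq₂ : Module.finrank ℚ K₂ = 2)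
    (hq₃ : Module.finrank ℚ K₃ = 2)
    (u₁ : (𝓞 K₁)ˣ) (u₂ : (𝓞 K₂)ˣ) (u₃ : (𝓞 K₃)ˣ)
    (hu₁ : (1 : ℝ) < ((u₁ : 𝓞 K₁) : K₁)) (hu₂ : (1 : ℝ) < ((u₂ : 𝓞 K₂) : K₂))
    (hu₃ : (1 : ℝ) < ((u₃ : 𝓞 K₃) : K₃))
    (hfund₁ : ∀ w : (𝓞 K₁)ˣ, ∃ k : ℤ, w = u₁ ^ k ∨ w = -u₁ ^ k)
    (hfund₂ : ∀ w : (𝓞 K₂)ˣ, ∃ k : ℤ, w = u₂ ^ k ∨ w = -u₂ ^ k)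
    (hfund₃ : ∀ w : (𝓞 K₃)ˣ, ∃ k : ℤ, w = u₃ ^ k ∨ w = -u₃ ^ k)
    (u : (𝓞 L)ˣ) :
    ∃ m₁ m₂ m₃ : ℤ,
      ((((u : 𝓞 L) : L) : ℝ) ^ 2 =
          (((u₁ : 𝓞 K₁) : K₁) : ℝ) ^ m₁ * (((u₂ : 𝓞 K₂) : K₂) : ℝ) ^ m₂ *
            (((u₃ : 𝓞 K₃) : K₃) : ℝ) ^ m₃) ∨
      ((((u : 𝓞 L) : L) : ℝ) ^ 2 =
          -((((u₁ : 𝓞 K₁) : K₁) : ℝ) ^ m₁ * (((u₂ : 𝓞 K₂) : K₂) : ℝ) ^ m₂ *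
            (((u₃ : 𝓞 K₃) : K₃) : ℝ) ^ m₃)) := by
  classical
  haveI hfd : FiniteDimensional ℚ L :=
    FiniteDimensional.of_finrank_pos (by rw [hdeg]; norm_num)
  -- the intermediate fields of L corresponding to K₁ K₂ K₃
  have hs₁ : Real.sqrt d₁ ∈ L := hK₁L (hK₁ ▸ IntermediateField.mem_adjoin_simple_self ℚ _)
  have hs₂ : Real.sqrt d₂ ∈ L := hK₂L (hK₂ ▸ IntermediateField.mem_adjoin_simple_self ℚ _)
  have hs₃ : Real.sqrt d₃ ∈ L := hK₃L (hK₃ ▸ IntermediateField.mem_adjoin_simple_self ℚ _)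
  set F₁ : IntermediateField ℚ L := IntermediateField.adjoin ℚ {(⟨Real.sqrt d₁, hs₁⟩ : L)}
  set F₂ : IntermediateField ℚ L := IntermediateField.adjoin ℚ {(⟨Real.sqrt d₂, hs₂⟩ : L)}
  set F₃ : IntermediateField ℚ L := IntermediateField.adjoin ℚ {(⟨Real.sqrt d₃, hs₃⟩ : L)}
  have hF₁ : IntermediateField.lift F₁ = K₁ := by
    rw [hK₁]; exact IntermediateField.lift_adjoin_simple (K := L) (α := ⟨_, hs₁⟩)
  have hF₂ : IntermediateField.lift F₂ = K₂ := by
    rw [hK₂]; exact IntermediateField.lift_adjoin_simple (K := L) (α := ⟨_, hs₂⟩)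
  have hF₃ : IntermediateField.lift F₃ = K₃ := by
    rw [hK₃]; exact IntermediateField.lift_adjoin_simple (K := L) (α := ⟨_, hs₃⟩)
  -- finrank computations
  have hrank : ∀ (F : IntermediateField ℚ L) (K : IntermediateField ℚ ℝ),
      IntermediateField.lift F = K → Module.finrank ℚ K = 2 →
      Module.finrank (↥F) (↥L) = 2 := by
    intro F K hFK hK2
    subst hFK
    have e2 : Module.finrank ℚ (↥F) = 2 := by
      have h := (IntermediateField.liftAlgEquiv F).toLinearEquiv.finrank_eq
      exact h.trans hK2
    have tower := Module.finrank_mul_finrank ℚ (↥F) (↥L)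
    rw [e2, hdeg] at tower
    omega
  -- the fixing subgroups have order 2
  have hcard : ∀ (F : IntermediateField ℚ L) (K : IntermediateField ℚ ℝ),
      IntermediateField.lift F = K → Module.finrank ℚ K = 2 →
      Nat.card F.fixingSubgroup = 2 := by
    intro F K hFK hK2
    rw [IsGalois.card_fixingSubgroup_eq_finrank]
    exact hrank F K hFK hK2
  obtain ⟨τ₁, hτ₁mem, hτ₁ne, hτ₁uniq⟩ := unique_ne_one _ (hcard F₁ K₁ hF₁ hq₁)
  obtain ⟨τ₂, hτ₂mem, hτ₂ne, hτ₂uniq⟩ := unique_ne_one _ (hcard F₂ K₂ hF₂ hq₂)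
  obtain ⟨τ₃, hτ₃mem, hτ₃ne, hτ₃uniq⟩ := unique_ne_one _ (hcard F₃ K₃ hF₃ hq₃)
  -- every element of the Galois group squares to 1
  have hsq : ∀ σ : L ≃ₐ[ℚ] L, σ * σ = 1 := by
    obtain ⟨e⟩ := hklein
    intro σ
    apply e.injective
    rw [map_mul, map_one]
    exact (by decide : ∀ m : Multiplicative (ZMod 2 × ZMod 2), m * m = 1) (e σ)
  -- distinctness of the τ's
  have hFne : ∀ (F F' : IntermediateField ℚ L) (K K' : IntermediateField ℚ ℝ),
      IntermediateField.lift F = K → IntermediateField.lift F' = K' → K ≠ K' →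
      (τ : L ≃ₐ[ℚ] L) → τ ∈ F.fixingSubgroup → τ ≠ 1 →
      (∀ g ∈ F.fixingSubgroup, g = 1 ∨ g = τ) →
      (τ' : L ≃ₐ[ℚ] L) → τ' ∈ F'.fixingSubgroup → τ' ≠ 1 →
      (∀ g ∈ F'.fixingSubgroup, g = 1 ∨ g = τ') → τ ≠ τ' := by
    intro F F' K K' hFK hFK' hKK' τ hτm hτn hτu τ' hτm' hτn' hτu' heq
    apply hKK'
    have hHeq : F.fixingSubgroup = F'.fixingSubgroup := by
      apply le_antisymm
      · intro g hg
        rcases hτu g hg with rfl | rfl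
        · exact one_mem _
        · rw [heq]; exact hτm'
      · intro g hg
        rcases hτu' g hg with rfl | rfl
        · exact one_mem _
        · rw [← heq]; exact hτm
    have hFeq : F = F' := by
      rw [← IsGalois.fixedField_fixingSubgroup F, ← IsGalois.fixedField_fixingSubgroup F', hHeq]
    rw [← hFK, ← hFK', hFeq]
  have hne12 : τ₁ ≠ τ₂ := hFne F₁ F₂ K₁ K₂ hF₁ hF₂ h12 τ₁ hτ₁mem hτ₁ne hτ₁uniq τ₂ hτ₂mem hτ₂ne hτ₂uniq
  have hne13 : τ₁ ≠ τ₃ := hFne F₁ F₃ K₁ K₃ hF₁ hF₃ h13 τ₁ hτ₁mem hτ₁ne hτ₁uniq τ₃ hτ₃mem hτ₃ne hτ₃uniq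
  have hne23 : τ₂ ≠ τ₃ := hFne F₂ F₃ K₂ K₃ hF₂ hF₃ h23 τ₂ hτ₂mem hτ₂ne hτ₂uniq τ₃ hτ₃mem hτ₃ne hτ₃uniq
  -- the Galois group is exactly {1, τ₁, τ₂, τ₃}
  have hcardG : Fintype.card (L ≃ₐ[ℚ] L) = 4 := by
    rw [← Nat.card_eq_fintype_card, IsGalois.card_aut_eq_finrank, hdeg]
  have huniv : (Finset.univ : Finset (L ≃ₐ[ℚ] L)) = {1, τ₁, τ₂, τ₃} := by
    symm
    apply Finset.eq_univ_of_card
    rw [hcardG]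
    rw [Finset.card_insert_of_notMem (by
        simp only [Finset.mem_insert, Finset.mem_singleton]
        push_neg
        exact ⟨Ne.symm hτ₁ne, Ne.symm hτ₂ne, Ne.symm hτ₃ne⟩),
      Finset.card_insert_of_notMem (by
        simp only [Finset.mem_insert, Finset.mem_singleton]
        push_neg
        exact ⟨hne12, hne13⟩),
      Finset.card_insert_of_notMem (by simpa using hne23),
      Finset.card_singleton]
  -- apply the quadratic step for each field
  set z : L := ((u : 𝓞 L) : L) with hzdef
  obtain ⟨k₁, hy₁⟩ := quad_step hF₁ (hsq τ₁) hτ₁uniq u₁ hfund₁ u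
  obtain ⟨k₂, hy₂⟩ := quad_step hF₂ (hsq τ₂) hτ₂uniq u₂ hfund₂ u
  obtain ⟨k₃, hy₃⟩ := quad_step hF₃ (hsq τ₃) hτ₃uniq u₃ hfund₃ u
  have hN := norm_pm_one u
  have hprod : (∏ g : L ≃ₐ[ℚ] L, ((g ((u : 𝓞 L) : L) : L) : ℝ)) =
      ((((u : 𝓞 L) : L) : ℝ)) * (((τ₁ ((u : 𝓞 L) : L) : L) : ℝ) *
        (((τ₂ ((u : 𝓞 L) : L) : L) : ℝ) * ((τ₃ ((u : 𝓞 L) : L) : L) : ℝ))) := by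
    rw [show (Finset.univ : Finset (L ≃ₐ[ℚ] L)) = {1, τ₁, τ₂, τ₃} from huniv]
    rw [Finset.prod_insert (by
        simp only [Finset.mem_insert, Finset.mem_singleton]
        push_neg
        exact ⟨Ne.symm hτ₁ne, Ne.symm hτ₂ne, Ne.symm hτ₃ne⟩),
      Finset.prod_insert (by
        simp only [Finset.mem_insert, Finset.mem_singleton]
        push_neg
        exact ⟨hne12, hne13⟩),
      Finset.prod_insert (by simpa using hne23),
      Finset.prod_singleton]
    simp
  rw [hprod] at hN
  refine ⟨k₁, k₂, k₃, ?_⟩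
  set x : ℝ := (((u : 𝓞 L) : L) : ℝ) with hx
  set t₁ : ℝ := ((τ₁ ((u : 𝓞 L) : L) : L) : ℝ) with ht₁
  set t₂ : ℝ := ((τ₂ ((u : 𝓞 L) : L) : L) : ℝ) with ht₂
  set t₃ : ℝ := ((τ₃ ((u : 𝓞 L) : L) : L) : ℝ) with ht₃
  set r₁ : ℝ := (((u₁ : 𝓞 K₁) : K₁) : ℝ) with hr₁
  set r₂ : ℝ := (((u₂ : 𝓞 K₂) : K₂) : ℝ) with hr₂
  set r₃ : ℝ := (((u₃ : 𝓞 K₃) : K₃) : ℝ) with hr₃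
  have key : x ^ 2 * (x * (t₁ * (t₂ * t₃))) = (x * t₁) * ((x * t₂) * (x * t₃)) := by ring
  rcases hN with h | h <;> rcases hy₁ with h1 | h1 <;> rcases hy₂ with h2 | h2 <;>
    rcases hy₃ with h3 | h3 <;> rw [h, h1, h2, h3] at key <;>
    first
      | exact Or.inl (by linear_combination key)
      | exact Or.inr (by linear_combination key)
      | exact Or.inl (by linear_combination -key)
      | exact Or.inr (by linear_combination -key)
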